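/- Let C ⊆ F_2^n be a binary linear code with minimum distance d_min ≥ 2t + 1, and let (U, E, p) model a received word with u errors and e erasures satisfying 2u + e ≤ 2t, with complementary test patterns y^(1), y^(2). Then (i) at least one of y^(1), y^(2) lies within Hamming distance t of the all-zero codeword, and (ii) for every nonzero codeword c ∈ C, d_E(c) > d_E(0). Consequently, among all codewords of C that lie within Hamming distance t of y^(1) or of y^(2), the all-zero codeword is present and is the unique one minimizing the erased distance d_E, so the error-and-erasure decoder (which applies bounded distance decoding of radius t to both test patterns and selects the candidate codeword with smaller erased distance) outputs the transmitted codeword. -/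

import Mathlib

/-- First test pattern: erasures filled with `p`. -/
def testPattern1 {n : ℕ} (U E : Finset (Fin n)) (p : Fin n → ZMod 2) :
    Fin n → ZMod 2 :=
  fun j => if j ∈ U then 1 else if j ∈ E then p j else 0

/-- Second test pattern: erasures filled with the complementary pattern `1 + p`. -/
def testPattern2 {n : ℕ} (U E : Finset (Fin n)) (p : Fin n → ZMod 2) :
    Fin n → ZMod 2 :=
  fun j => if j ∈ U then 1 else if j ∈ E then 1 + p j else 0

/-- The erased distance `d_E(c) = |{i ∉ E : c_i ≠ y_i}|`, where `y_i = 1` for `i ∈ U`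
and `y_i = 0` for `i ∉ U ∪ E`. -/
def erasedDist {n : ℕ} (U E : Finset (Fin n)) (c : Fin n → ZMod 2) : ℕ :=
  (Finset.univ.filter
    (fun i => i ∉ E ∧ c i ≠ (if i ∈ U then (1 : ZMod 2) else 0))).card

/-- If `d_min ≥ 2t + 1` and `2u + e ≤ 2t`, then (i) at least one
test pattern lies within distance `t` of the all-zero codeword, (ii) every nonzero
codeword `c ∈ C` has `d_E(c) > d_E(0)`, and consequently among the codewords found by
bounded distance decoding of the two test patterns, the all-zero codeword is present
and is the unique minimizer of the erased distance, so the error-and-erasure decoder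
outputs the transmitted codeword. -/
theorem eaed_success {n t : ℕ} (C : Submodule (ZMod 2) (Fin n → ZMod 2))
    (U E : Finset (Fin n)) (p : Fin n → ZMod 2) (u e : ℕ)
    (hU : U.card = u) (hE : E.card = e) (hUE : Disjoint U E)
    (hpsupp : ∀ i ∉ E, p i = 0)
    (hdmin : ∀ c ∈ C, c ≠ 0 → 2 * t + 1 ≤ hammingNorm c)
    (h : 2 * u + e ≤ 2 * t) :
    (hammingNorm (testPattern1 U E p) ≤ t ∨
        hammingNorm (testPattern2 U E p) ≤ t) ∧
    (∀ c ∈ C, c ≠ 0 →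
        erasedDist U E (0 : Fin n → ZMod 2) < erasedDist U E c) ∧
    ((0 : Fin n → ZMod 2) ∈ C ∧
      (hammingDist (testPattern1 U E p) (0 : Fin n → ZMod 2) ≤ t ∨
       hammingDist (testPattern2 U E p) (0 : Fin n → ZMod 2) ≤ t)) ∧
    (∀ c ∈ C,
        (hammingDist (testPattern1 U E p) c ≤ t ∨
         hammingDist (testPattern2 U E p) c ≤ t) →
        c ≠ 0 →
        erasedDist U E (0 : Fin n → ZMod 2) < erasedDist U E c) := by
  classical
  -- support of the first test pattern
  have h1 : hammingNorm (testPattern1 U E p)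
      = u + (E.filter (fun i => p i ≠ 0)).card := by
    have hset : (Finset.univ.filter (fun i => testPattern1 U E p i ≠ 0))
        = U ∪ E.filter (fun i => p i ≠ 0) := by
      ext i
      rw [Finset.mem_filter]
      simp only [Finset.mem_filter, Finset.mem_univ, true_and, Finset.mem_union,
        testPattern1]
      by_cases hiU : i ∈ U <;> by_cases hiE : i ∈ E <;> simp [hiU, hiE]
    have hdisj : Disjoint U (E.filter (fun i => p i ≠ 0)) :=
      hUE.mono_right (Finset.filter_subset _ _)
    rw [hammingNorm, hset, Finset.card_union_of_disjoint hdisj, hU]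
  have h2 : hammingNorm (testPattern2 U E p)
      = u + (E.filter (fun i => ¬ p i ≠ 0)).card := by
    have hset : (Finset.univ.filter (fun i => testPattern2 U E p i ≠ 0))
        = U ∪ E.filter (fun i => ¬ p i ≠ 0) := by
      ext i
      rw [Finset.mem_filter]
      simp only [Finset.mem_filter, Finset.mem_univ, true_and, Finset.mem_union,
        testPattern2]
      have hz : ∀ x : ZMod 2, (1 + x ≠ 0) ↔ x = 0 := by decide
      by_cases hiU : i ∈ U <;> by_cases hiE : i ∈ E <;>
        simp [hiU, hiE, hz, not_not]
    have hdisj : Disjoint U (E.filter (fun i => ¬ p i ≠ 0)) :=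
      hUE.mono_right (Finset.filter_subset _ _)
    rw [hammingNorm, hset, Finset.card_union_of_disjoint hdisj, hU]
  have hsplit := Finset.card_filter_add_card_filter_not
    (s := E) (p := fun i => p i ≠ 0)
  have hsum : hammingNorm (testPattern1 U E p) + hammingNorm (testPattern2 U E p)
      = 2 * u + e := by
    rw [h1, h2, ← hE]; omega
  have part1 : hammingNorm (testPattern1 U E p) ≤ t ∨
      hammingNorm (testPattern2 U E p) ≤ t := by omega
  -- erased distance of 0
  have hd0 : erasedDist U E (0 : Fin n → ZMod 2) = u := by
    rw [← hU, erasedDist]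
    congr 1
    ext i
    simp only [Finset.mem_filter, Finset.mem_univ, true_and, Pi.zero_apply]
    constructor
    · rintro ⟨hiE, hne⟩
      by_contra hiU
      simp [hiU] at hne
    · intro hiU
      refine ⟨Finset.disjoint_left.mp hUE hiU, ?_⟩
      simp [hiU]
  have part2 : ∀ c ∈ C, c ≠ 0 →
      erasedDist U E (0 : Fin n → ZMod 2) < erasedDist U E c := by
    intro c hc hc0
    have hnorm := hdmin c hc hc0
    have hsub : Finset.univ.filter (fun i => c i ≠ 0) ⊆
        ((Finset.univ.filter
          (fun i => i ∉ E ∧ c i ≠ (if i ∈ U then (1 : ZMod 2) else 0))) ∪ E) ∪ U := by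
      intro i hi
      simp only [Finset.mem_filter, Finset.mem_univ, true_and] at hi
      simp only [Finset.mem_union, Finset.mem_filter, Finset.mem_univ, true_and]
      by_cases hiE : i ∈ E
      · tauto
      by_cases hiU : i ∈ U
      · tauto
      · exact Or.inl (Or.inl ⟨hiE, by simpa [hiU] using hi⟩)
    have hc1 := Finset.card_le_card hsub
    have hc2 := Finset.card_union_le
      ((Finset.univ.filter
          (fun i => i ∉ E ∧ c i ≠ (if i ∈ U then (1 : ZMod 2) else 0))) ∪ E) U
    have hc3 := Finset.card_union_le
      (Finset.univ.filter
          (fun i => i ∉ E ∧ c i ≠ (if i ∈ U then (1 : ZMod 2) else 0))) E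
    have hnc : hammingNorm c = (Finset.univ.filter (fun i => c i ≠ 0)).card := rfl
    have hec : erasedDist U E c = (Finset.univ.filter
          (fun i => i ∉ E ∧ c i ≠ (if i ∈ U then (1 : ZMod 2) else 0))).card := rfl
    omega
  refine ⟨part1, part2, ⟨C.zero_mem, ?_⟩, fun c hc _ hc0 => part2 c hc hc0⟩
  simpa [hammingDist_zero_right] using part1
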